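/- arXiv:1308.5249 — 3 statements merged into one kernel-verified Lean document; each statement's English description precedes it below -/
import Mathlib

section
/- Let v ∈ ℝⁿ with ‖v‖₁ ≤ C and ‖v‖_∞ ≤ C/k for a positive constant C and positive integer k ≤ n. Then v can be written as a convex combination v = Σ_{t=1}^M x_t w_t (x_t ≥ 0, Σ x_t = 1) of k-sparse vectors w_t satisfying ‖w_t‖₁ = ‖v‖₁ and ‖w_t‖_∞ ≤ C/k for every t. -/
open scoped Classical BigOperators

noncomputable def l1 {n : ℕ} (v : Fin n → ℝ) : ℝ := ∑ i, |v i|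

noncomputable def l2 {n : ℕ} (v : Fin n → ℝ) : ℝ := Real.sqrt (∑ i, (v i) ^ 2)

def Sparse {n : ℕ} (k : ℕ) (v : Fin n → ℝ) : Prop :=
  (Finset.univ.filter (fun i => v i ≠ 0)).card ≤ k

def restrict {n : ℕ} (S : Finset (Fin n)) (v : Fin n → ℝ) : Fin n → ℝ :=
  fun i => if i ∈ S then v i else 0

def DRIP {n p d : ℕ} (Φ : Matrix (Fin n) (Fin p) ℝ) (D : Matrix (Fin p) (Fin d) ℝ)
    (m : ℕ) (δ : ℝ) : Prop :=
  ∀ v : Fin d → ℝ, Sparse m v →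
    (1 - δ) * (l2 (D.mulVec v)) ^ 2 ≤ (l2 (Φ.mulVec (D.mulVec v))) ^ 2 ∧
    (l2 (Φ.mulVec (D.mulVec v))) ^ 2 ≤ (1 + δ) * (l2 (D.mulVec v)) ^ 2

def IsLargestK {n : ℕ} (k : ℕ) (a : Fin n → ℝ) (T : Finset (Fin n)) : Prop :=
  T.card = k ∧ ∀ i ∈ T, ∀ j ∉ T, |a j| ≤ |a i|

open Finset

/-- A convex decomposition into k-sparse vectors with ℓ¹-norm L and sup bound B. -/
def Decomp {n : ℕ} (k : ℕ) (B L : ℝ) (v : Fin n → ℝ) : Prop :=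
  ∃ (M : ℕ) (x : Fin M → ℝ) (w : Fin M → (Fin n → ℝ)),
    (∀ t, 0 ≤ x t) ∧ (∑ t, x t = 1) ∧
    (∀ t, Sparse k (w t)) ∧
    (∀ t, l1 (w t) = L) ∧
    (∀ t, ∀ i, |w t i| ≤ B) ∧
    v = ∑ t, x t • w t

lemma decomp_base {n k : ℕ} {B : ℝ} (v : Fin n → ℝ)
    (hs : (univ.filter (fun m => v m ≠ 0)).card ≤ k)
    (hb : ∀ i, |v i| ≤ B) : Decomp k B (l1 v) v := by
  refine ⟨1, fun _ => 1, fun _ => v, fun _ => zero_le_one, by simp, fun _ => hs,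
    fun _ => rfl, fun _ => hb, by simp⟩

lemma decomp_combine {n k : ℕ} {B L : ℝ} {u₁ u₂ : Fin n → ℝ} {lam : ℝ}
    (h0 : 0 ≤ lam) (h1 : lam ≤ 1)
    (d1 : Decomp k B L u₁) (d2 : Decomp k B L u₂) :
    Decomp k B L (lam • u₁ + (1 - lam) • u₂) := by
  obtain ⟨M₁, x₁, w₁, hx₁, hs₁, hsp₁, hl₁, hb₁, he₁⟩ := d1
  obtain ⟨M₂, x₂, w₂, hx₂, hs₂, hsp₂, hl₂, hb₂, he₂⟩ := d2
  refine ⟨M₁ + M₂, Fin.addCases (fun t => lam * x₁ t) (fun t => (1 - lam) * x₂ t),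
    Fin.addCases w₁ w₂, ?_, ?_, ?_, ?_, ?_, ?_⟩
  · intro t
    refine Fin.addCases (fun s => ?_) (fun s => ?_) t
    · simpa using mul_nonneg h0 (hx₁ s)
    · simpa using mul_nonneg (by linarith) (hx₂ s)
  · rw [Fin.sum_univ_add]
    simp only [Fin.addCases_left, Fin.addCases_right]
    rw [← Finset.mul_sum, ← Finset.mul_sum, hs₁, hs₂]; ring
  · intro t
    refine Fin.addCases (fun s => ?_) (fun s => ?_) t
    · simpa using hsp₁ s
    · simpa using hsp₂ s
  · intro t
    refine Fin.addCases (fun s => ?_) (fun s => ?_) t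
    · simpa using hl₁ s
    · simpa using hl₂ s
  · intro t
    refine Fin.addCases (fun s => ?_) (fun s => ?_) t
    · simpa using hb₁ s
    · simpa using hb₂ s
  · rw [Fin.sum_univ_add]
    simp only [Fin.addCases_left, Fin.addCases_right]
    rw [he₁, he₂] at *
    rw [Finset.smul_sum, Finset.smul_sum]
    congr 1 <;> · apply Finset.sum_congr rfl; intro s _; rw [mul_smul]

/-- modify v at coordinates i and j multiplicatively -/
def tweak {n : ℕ} (v : Fin n → ℝ) (i j : Fin n) (p q : ℝ) : Fin n → ℝ :=
  fun m => if m = i then v i * p else if m = j then v j * q else v m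

lemma tweak_abs_i {n : ℕ} (v : Fin n → ℝ) (i j : Fin n) {p : ℝ} (q : ℝ) (hp : 0 ≤ p) :
    |tweak v i j p q i| = |v i| * p := by
  simp [tweak, abs_mul, abs_of_nonneg hp]

lemma tweak_abs_j {n : ℕ} (v : Fin n → ℝ) {i j : Fin n} (hij : i ≠ j) (p : ℝ) {q : ℝ}
    (hq : 0 ≤ q) : |tweak v i j p q j| = |v j| * q := by
  simp [tweak, hij.symm, abs_mul, abs_of_nonneg hq]

lemma l1_tweak {n : ℕ} (v : Fin n → ℝ) {i j : Fin n} (hij : i ≠ j) {p q : ℝ}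
    (hp : 0 ≤ p) (hq : 0 ≤ q) :
    l1 (tweak v i j p q) = l1 v - |v i| - |v j| + |v i| * p + |v j| * q := by
  have hji : j ≠ i := hij.symm
  have key : ∀ f : Fin n → ℝ,
      ∑ m, f m = f i + (f j + ∑ m ∈ (univ.erase i).erase j, f m) := by
    intro f
    rw [← Finset.add_sum_erase _ f (mem_univ i),
      ← Finset.add_sum_erase _ f (mem_erase.mpr ⟨hji, mem_univ j⟩)]
  unfold l1
  rw [key (fun m => |tweak v i j p q m|), key (fun m => |v m|)]
  have h3 : ∑ m ∈ (univ.erase i).erase j, |tweak v i j p q m|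
      = ∑ m ∈ (univ.erase i).erase j, |v m| := by
    apply Finset.sum_congr rfl
    intro m hm
    rw [mem_erase] at hm
    have hmi : m ≠ i := (mem_erase.mp hm.2).1
    simp [tweak, hmi, hm.1]
  rw [tweak_abs_i v i j q hp, tweak_abs_j v hij p hq, h3]
  ring

lemma tweak_bound {n : ℕ} (v : Fin n → ℝ) (i j : Fin n) {p q B : ℝ}
    (hv : ∀ m, |v m| ≤ B) (hpi : |v i| * p ≤ B) (hqj : |v j| * q ≤ B)
    (hp : 0 ≤ p) (hq : 0 ≤ q) : ∀ m, |tweak v i j p q m| ≤ B := by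
  intro m
  unfold tweak
  split_ifs with h1 h2
  · subst h1; rw [abs_mul, abs_of_nonneg hp]; exact hpi
  · subst h2; rw [abs_mul, abs_of_nonneg hq]; exact hqj
  · exact hv m

lemma supp_tweak {n : ℕ} (v : Fin n → ℝ) (i j : Fin n) (p q : ℝ) :
    univ.filter (fun m => tweak v i j p q m ≠ 0) ⊆ univ.filter (fun m => v m ≠ 0) := by
  intro m hm
  simp only [mem_filter, mem_univ, true_and] at hm ⊢
  unfold tweak at hm
  by_cases hmi : m = i
  · rw [if_pos hmi] at hm
    rw [hmi]
    intro h; exact hm (by rw [h]; ring)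
  · by_cases hmj : m = j
    · rw [if_neg hmi, if_pos hmj] at hm
      rw [hmj]
      intro h; exact hm (by rw [h]; ring)
    · simpa [hmi, hmj] using hm

lemma uns_tweak {n : ℕ} (v : Fin n → ℝ) {i j : Fin n} {B : ℝ} (p q : ℝ)
    (hi : i ∈ univ.filter (fun m => v m ≠ 0 ∧ |v m| < B))
    (hj : j ∈ univ.filter (fun m => v m ≠ 0 ∧ |v m| < B)) :
    univ.filter (fun m => tweak v i j p q m ≠ 0 ∧ |tweak v i j p q m| < B)
      ⊆ univ.filter (fun m => v m ≠ 0 ∧ |v m| < B) := by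
  intro m hm
  by_cases hmi : m = i
  · subst hmi; exact hi
  · by_cases hmj : m = j
    · subst hmj; exact hj
    · simp only [mem_filter, mem_univ, true_and] at hm ⊢
      unfold tweak at hm
      simpa [hmi, hmj] using hm

lemma tweak_convex {n : ℕ} (v : Fin n → ℝ) {i j : Fin n} (hij : i ≠ j)
    (lam p₁ q₁ p₂ q₂ : ℝ)
    (hp : lam * p₁ + (1 - lam) * p₂ = 1) (hq : lam * q₁ + (1 - lam) * q₂ = 1) :
    lam • tweak v i j p₁ q₁ + (1 - lam) • tweak v i j p₂ q₂ = v := by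
  funext m
  simp only [Pi.add_apply, Pi.smul_apply, smul_eq_mul]
  unfold tweak
  by_cases hmi : m = i
  · rw [if_pos hmi, if_pos hmi, hmi]
    linear_combination v i * hp
  · by_cases hmj : m = j
    · rw [if_neg hmi, if_neg hmi, if_pos hmj, if_pos hmj, hmj]
      linear_combination v j * hq
    · rw [if_neg hmi, if_neg hmi, if_neg hmj, if_neg hmj]; ring

lemma main_aux {n k : ℕ} (hk : 0 < k) {C : ℝ} (hC : 0 < C) :
    ∀ N : ℕ, ∀ v : Fin n → ℝ, l1 v ≤ C → (∀ i, |v i| ≤ C / k) →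
      (univ.filter (fun m => v m ≠ 0)).card
        + (univ.filter (fun m => v m ≠ 0 ∧ |v m| < C / k)).card ≤ N →
      Decomp k (C / k) (l1 v) v := by
  have hB : 0 < C / (k : ℝ) := div_pos hC (by exact_mod_cast hk)
  intro N
  induction N with
  | zero =>
    intro v hv1 hvB hN
    exact decomp_base v (by omega) hvB
  | succ N ih =>
    intro v hv1 hvB hN
    by_cases hs : (univ.filter (fun m => v m ≠ 0)).card ≤ k
    · exact decomp_base v hs hvB
    · push_neg at hs
      -- the two parts of the support: saturated and unsaturated entries
      have hsatset : (univ.filter (fun m => v m ≠ 0)).filter (fun m => |v m| = C / k)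
          = univ.filter (fun m => |v m| = C / k) := by
        ext m
        simp only [mem_filter, mem_univ, true_and, filter_filter]
        constructor
        · rintro ⟨_, h⟩; exact h
        · intro h
          refine ⟨fun h0 => ?_, h⟩
          rw [h0, abs_zero] at h
          exact absurd h.symm (ne_of_gt hB)
      have hunsset : (univ.filter (fun m => v m ≠ 0)).filter (fun m => ¬ |v m| = C / k)
          = univ.filter (fun m => v m ≠ 0 ∧ |v m| < C / k) := by
        ext m
        simp only [mem_filter, mem_univ, true_and, filter_filter]
        constructor
        · rintro ⟨h0, h⟩; exact ⟨h0, lt_of_le_of_ne (hvB m) h⟩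
        · rintro ⟨h0, h⟩; exact ⟨h0, ne_of_lt h⟩
      have hsplit : (univ.filter (fun m => v m ≠ 0)).card
          = (univ.filter (fun m => |v m| = C / k)).card
            + (univ.filter (fun m => v m ≠ 0 ∧ |v m| < C / k)).card := by
        rw [← hsatset, ← hunsset,
          Finset.card_filter_add_card_filter_not (p := fun m => |v m| = C / k)]
      -- sum over saturated set
      have hsatsum : ∑ m ∈ univ.filter (fun m => |v m| = C / k), |v m|
          = ((univ.filter (fun m => |v m| = C / k)).card : ℝ) * (C / k) := by
        rw [Finset.sum_congr rfl (fun m hm => (mem_filter.mp hm).2), Finset.sum_const,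
          nsmul_eq_mul]
      have hsatle : ∑ m ∈ univ.filter (fun m => |v m| = C / k), |v m| ≤ C := by
        refine le_trans ?_ hv1
        exact Finset.sum_le_sum_of_subset_of_nonneg (Finset.subset_univ _)
          (fun m _ _ => abs_nonneg _)
      have hsatcard : (univ.filter (fun m => |v m| = C / k)).card ≤ k := by
        by_contra hcon
        push_neg at hcon
        have h1 : (k + 1 : ℝ) ≤ ((univ.filter (fun m => |v m| = C / k)).card : ℝ) := by
          exact_mod_cast hcon
        have h2 : ((k : ℝ) + 1) * (C / k) ≤ ((univ.filter (fun m => |v m| = C / k)).card : ℝ) * (C / k) :=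
          mul_le_mul_of_nonneg_right (by push_cast at h1 ⊢; linarith) (le_of_lt hB)
        have hkC : (k : ℝ) * (C / k) = C := by
          field_simp
        nlinarith [hsatsum, hsatle]
      -- there are at least two unsaturated entries
      have huns2 : 1 < (univ.filter (fun m => v m ≠ 0 ∧ |v m| < C / k)).card := by
        by_contra h
        push_neg at h
        have hsatk : (univ.filter (fun m => |v m| = C / k)).card = k := by omega
        have hunsk : (univ.filter (fun m => v m ≠ 0 ∧ |v m| < C / k)).card = 1 := by omega
        obtain ⟨m₀, hm₀⟩ := Finset.card_eq_one.mp hunsk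
        have hm₀mem : m₀ ∈ univ.filter (fun m => v m ≠ 0 ∧ |v m| < C / k) := by
          rw [hm₀]; exact mem_singleton_self m₀
        have hm₀pos : 0 < |v m₀| := abs_pos.mpr (mem_filter.mp hm₀mem).2.1
        have hsum : ∑ m ∈ univ.filter (fun m => v m ≠ 0), |v m| ≤ l1 v :=
          Finset.sum_le_sum_of_subset_of_nonneg (Finset.subset_univ _)
            (fun m _ _ => abs_nonneg _)
        have hsum2 : ∑ m ∈ univ.filter (fun m => v m ≠ 0), |v m|
            = ∑ m ∈ univ.filter (fun m => |v m| = C / k), |v m|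
              + ∑ m ∈ univ.filter (fun m => v m ≠ 0 ∧ |v m| < C / k), |v m| := by
          rw [← hsatset, ← hunsset,
            Finset.sum_filter_add_sum_filter_not (univ.filter (fun m => v m ≠ 0))
              (fun m => |v m| = C / k)]
        have hsum3 : ∑ m ∈ univ.filter (fun m => v m ≠ 0 ∧ |v m| < C / k), |v m| = |v m₀| := by
          rw [hm₀, Finset.sum_singleton]
        have hkC : (k : ℝ) * (C / k) = C := by field_simp
        rw [hsum2, hsum3, hsatsum, hsatk] at hsum
        linarith
      obtain ⟨i, hi, j, hj, hij⟩ := Finset.one_lt_card.mp huns2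
      have hi' := (mem_filter.mp hi).2
      have hj' := (mem_filter.mp hj).2
      set a : ℝ := |v i| with ha_def
      set b : ℝ := |v j| with hb_def
      have ha0 : 0 < a := abs_pos.mpr hi'.1
      have hb0 : 0 < b := abs_pos.mpr hj'.1
      have haB : a < C / k := hi'.2
      have hbB : b < C / k := hj'.2
      set m₁ : ℝ := min b (C / k - a) with hm₁_def
      set m₂ : ℝ := min a (C / k - b) with hm₂_def
      have hm₁0 : 0 < m₁ := lt_min hb0 (by linarith)
      have hm₂0 : 0 < m₂ := lt_min ha0 (by linarith)
      have hm₁b : m₁ ≤ b := min_le_left _ _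
      have hm₁B : m₁ ≤ C / k - a := min_le_right _ _
      have hm₂a : m₂ ≤ a := min_le_left _ _
      have hm₂B : m₂ ≤ C / k - b := min_le_right _ _
      have hden : (0 : ℝ) < m₁ + m₂ := by linarith
      set lam : ℝ := m₂ / (m₁ + m₂) with hlam_def
      have hlam0 : 0 ≤ lam := div_nonneg (le_of_lt hm₂0) (le_of_lt hden)
      have hlam1 : lam ≤ 1 := by
        rw [hlam_def, div_le_one hden]; linarith
      set p₁ : ℝ := (a + m₁) / a with hp₁_def
      set q₁ : ℝ := (b - m₁) / b with hq₁_def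
      set p₂ : ℝ := (a - m₂) / a with hp₂_def
      set q₂ : ℝ := (b + m₂) / b with hq₂_def
      have hp₁0 : 0 ≤ p₁ := div_nonneg (by linarith) (le_of_lt ha0)
      have hq₁0 : 0 ≤ q₁ := div_nonneg (by linarith) (le_of_lt hb0)
      have hp₂0 : 0 ≤ p₂ := div_nonneg (by linarith) (le_of_lt ha0)
      have hq₂0 : 0 ≤ q₂ := div_nonneg (by linarith) (le_of_lt hb0)
      have hap₁ : a * p₁ = a + m₁ := by rw [hp₁_def]; field_simp
      have hbq₁ : b * q₁ = b - m₁ := by rw [hq₁_def]; field_simp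
      have hap₂ : a * p₂ = a - m₂ := by rw [hp₂_def]; field_simp
      have hbq₂ : b * q₂ = b + m₂ := by rw [hq₂_def]; field_simp
      set u₁ := tweak v i j p₁ q₁ with hu₁_def
      set u₂ := tweak v i j p₂ q₂ with hu₂_def
      have hl1u₁ : l1 u₁ = l1 v := by
        rw [hu₁_def, l1_tweak v hij hp₁0 hq₁0, ← ha_def, ← hb_def, hap₁, hbq₁]; ring
      have hl1u₂ : l1 u₂ = l1 v := by
        rw [hu₂_def, l1_tweak v hij hp₂0 hq₂0, ← ha_def, ← hb_def, hap₂, hbq₂]; ring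
      have hbu₁ : ∀ m, |u₁ m| ≤ C / k := by
        refine tweak_bound v i j hvB ?_ ?_ hp₁0 hq₁0
        · rw [← ha_def, hap₁]; linarith
        · rw [← hb_def, hbq₁]; linarith
      have hbu₂ : ∀ m, |u₂ m| ≤ C / k := by
        refine tweak_bound v i j hvB ?_ ?_ hp₂0 hq₂0
        · rw [← ha_def, hap₂]; linarith
        · rw [← hb_def, hbq₂]; linarith
      -- measure decrease for u₁
      have hmeas₁ : (univ.filter (fun m => u₁ m ≠ 0)).card
          + (univ.filter (fun m => u₁ m ≠ 0 ∧ |u₁ m| < C / k)).card ≤ N := by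
        have hsub_s := supp_tweak v i j p₁ q₁
        have hsub_u := uns_tweak v (B := C / k) p₁ q₁ hi hj
        rw [← hu₁_def] at hsub_s hsub_u
        rcases le_total b (C / k - a) with h | h
        · -- m₁ = b, so u₁ j = 0
          have hm₁eq : m₁ = b := min_eq_left h
          have hq₁z : q₁ = 0 := by rw [hq₁_def, hm₁eq]; field_simp; ring
          have hj0 : u₁ j = 0 := by
            rw [hu₁_def]; unfold tweak
            simp [hij.symm, hq₁z]
          have hjnot : j ∉ univ.filter (fun m => u₁ m ≠ 0) := by
            simp [hj0]
          have hjin : j ∈ univ.filter (fun m => v m ≠ 0) := by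
            simp [hj'.1]
          have hss : univ.filter (fun m => u₁ m ≠ 0) ⊂ univ.filter (fun m => v m ≠ 0) :=
            (Finset.ssubset_iff_of_subset hsub_s).mpr ⟨j, hjin, hjnot⟩
          have h1 := Finset.card_lt_card hss
          have h2 := Finset.card_le_card hsub_u
          omega
        · -- m₁ = C/k - a, so |u₁ i| = C/k
          have hm₁eq : m₁ = C / k - a := min_eq_right h
          have hiabs : |u₁ i| = C / k := by
            rw [hu₁_def, tweak_abs_i v i j q₁ hp₁0, ← ha_def, hap₁, hm₁eq]; ring
          have hinot : i ∉ univ.filter (fun m => u₁ m ≠ 0 ∧ |u₁ m| < C / k) := by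
            simp only [mem_filter, mem_univ, true_and, not_and]
            intro _; rw [hiabs]; exact lt_irrefl _
          have hss : univ.filter (fun m => u₁ m ≠ 0 ∧ |u₁ m| < C / k)
              ⊂ univ.filter (fun m => v m ≠ 0 ∧ |v m| < C / k) :=
            (Finset.ssubset_iff_of_subset hsub_u).mpr ⟨i, hi, hinot⟩
          have h1 := Finset.card_lt_card hss
          have h2 := Finset.card_le_card hsub_s
          omega
      -- measure decrease for u₂
      have hmeas₂ : (univ.filter (fun m => u₂ m ≠ 0)).card
          + (univ.filter (fun m => u₂ m ≠ 0 ∧ |u₂ m| < C / k)).card ≤ N := by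
        have hsub_s := supp_tweak v i j p₂ q₂
        have hsub_u := uns_tweak v (B := C / k) p₂ q₂ hi hj
        rw [← hu₂_def] at hsub_s hsub_u
        rcases le_total a (C / k - b) with h | h
        · -- m₂ = a, so u₂ i = 0
          have hm₂eq : m₂ = a := min_eq_left h
          have hp₂z : p₂ = 0 := by rw [hp₂_def, hm₂eq]; field_simp; ring
          have hi0 : u₂ i = 0 := by
            rw [hu₂_def]; unfold tweak
            simp [hp₂z]
          have hinot : i ∉ univ.filter (fun m => u₂ m ≠ 0) := by
            simp [hi0]
          have hiin : i ∈ univ.filter (fun m => v m ≠ 0) := by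
            simp [hi'.1]
          have hss : univ.filter (fun m => u₂ m ≠ 0) ⊂ univ.filter (fun m => v m ≠ 0) :=
            (Finset.ssubset_iff_of_subset hsub_s).mpr ⟨i, hiin, hinot⟩
          have h1 := Finset.card_lt_card hss
          have h2 := Finset.card_le_card hsub_u
          omega
        · -- m₂ = C/k - b, so |u₂ j| = C/k
          have hm₂eq : m₂ = C / k - b := min_eq_right h
          have hjabs : |u₂ j| = C / k := by
            rw [hu₂_def, tweak_abs_j v hij p₂ hq₂0, ← hb_def, hbq₂, hm₂eq]; ring
          have hjnot : j ∉ univ.filter (fun m => u₂ m ≠ 0 ∧ |u₂ m| < C / k) := by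
            simp only [mem_filter, mem_univ, true_and, not_and]
            intro _; rw [hjabs]; exact lt_irrefl _
          have hss : univ.filter (fun m => u₂ m ≠ 0 ∧ |u₂ m| < C / k)
              ⊂ univ.filter (fun m => v m ≠ 0 ∧ |v m| < C / k) :=
            (Finset.ssubset_iff_of_subset hsub_u).mpr ⟨j, hj, hjnot⟩
          have h1 := Finset.card_lt_card hss
          have h2 := Finset.card_le_card hsub_s
          omega
      have d₁ : Decomp k (C / k) (l1 v) u₁ := by
        have := ih u₁ (by rw [hl1u₁]; exact hv1) hbu₁ hmeas₁
        rwa [hl1u₁] at this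
      have d₂ : Decomp k (C / k) (l1 v) u₂ := by
        have := ih u₂ (by rw [hl1u₂]; exact hv1) hbu₂ hmeas₂
        rwa [hl1u₂] at this
      have hane : a ≠ 0 := ne_of_gt ha0
      have hbne : b ≠ 0 := ne_of_gt hb0
      have hdenne : m₁ + m₂ ≠ 0 := ne_of_gt hden
      have hconvp : lam * p₁ + (1 - lam) * p₂ = 1 := by
        rw [hlam_def, hp₁_def, hp₂_def]; field_simp; ring
      have hconvq : lam * q₁ + (1 - lam) * q₂ = 1 := by
        rw [hlam_def, hq₁_def, hq₂_def]; field_simp; ring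
      have hconv : lam • u₁ + (1 - lam) • u₂ = v := by
        rw [hu₁_def, hu₂_def]
        exact tweak_convex v hij lam p₁ q₁ p₂ q₂ hconvp hconvq
      have hfin := decomp_combine hlam0 hlam1 d₁ d₂
      rwa [hconv] at hfin

theorem sparse_convex_decomposition {n k : ℕ} (hk : 0 < k) (hkn : k ≤ n) (C : ℝ)
    (hC : 0 < C) (v : Fin n → ℝ) (hv1 : l1 v ≤ C) (hvinf : ∀ i, |v i| ≤ C / k) :
    ∃ (M : ℕ) (x : Fin M → ℝ) (w : Fin M → (Fin n → ℝ)),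
      (∀ t, 0 ≤ x t) ∧ (∑ t, x t = 1) ∧
      (∀ t, Sparse k (w t)) ∧
      (∀ t, l1 (w t) = l1 v) ∧
      (∀ t, ∀ i, |w t i| ≤ C / k) ∧
      v = ∑ t, x t • w t := by
  exact main_aux hk hC _ v hv1 hvinf le_rfl
end

section
/- Let D ∈ ℝ^{p×d} be a tight frame with DD* = I and let Φ ∈ ℝ^{n×p} satisfy the D-RIP with constant δ_{2k} < 2/3. Let β ∈ ℝ^p, y = Φβ + z with ‖z‖₂ ≤ ε, and let β̂ = argmin_{γ} ‖D*γ‖₁ subject to ‖y − Φγ‖₂ ≤ ε. Then ‖β − β̂‖₂ ≤ C₀ ε + C₁ ‖D*β − (D*β)_{max(k)}‖₁ / √k, where C₀ and C₁ are explicit constants depending only on δ_{2k} (e.g. C₀ = 8√(1+δ)/(3(2/3−δ)) and C₁ = 2 + 2(4δ + √(6δ(2/3−δ)))/(3(2/3−δ)) with δ = δ_{2k}). -/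
open scoped Classical BigOperators
open Matrix

-- basic l2 facts
lemma l2sq {n : ℕ} (v : Fin n → ℝ) : (l2 v) ^ 2 = ∑ i, (v i)^2 := by
  rw [l2, Real.sq_sqrt]; positivity

lemma l2_nonneg {n : ℕ} (v : Fin n → ℝ) : 0 ≤ l2 v := Real.sqrt_nonneg _

lemma l1_nonneg {n : ℕ} (v : Fin n → ℝ) : 0 ≤ l1 v := by
  apply Finset.sum_nonneg; intros; positivity

lemma dot_self {n : ℕ} (v : Fin n → ℝ) : v ⬝ᵥ v = (l2 v)^2 := by
  rw [l2sq]; simp [dotProduct, sq]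

lemma abs_dot_le {n : ℕ} (v w : Fin n → ℝ) : |v ⬝ᵥ w| ≤ l2 v * l2 w := by
  have h := Finset.sum_mul_sq_le_sq_mul_sq Finset.univ v w
  have : (v ⬝ᵥ w)^2 ≤ (l2 v * l2 w)^2 := by
    rw [mul_pow, l2sq, l2sq]; exact h
  have h2 : 0 ≤ l2 v * l2 w := mul_nonneg (l2_nonneg v) (l2_nonneg w)
  exact abs_le_abs (by nlinarith [abs_nonneg (v ⬝ᵥ w), le_abs_self (v ⬝ᵥ w)]) (by nlinarith [neg_abs_le (v ⬝ᵥ w)]) |>.trans_eq (abs_of_nonneg h2)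

lemma dot_le {n : ℕ} (v w : Fin n → ℝ) : v ⬝ᵥ w ≤ l2 v * l2 w :=
  (le_abs_self _).trans (abs_dot_le v w)

lemma l2_add_le {n : ℕ} (v w : Fin n → ℝ) : l2 (v + w) ≤ l2 v + l2 w := by
  have h1 : (l2 (v+w))^2 ≤ (l2 v + l2 w)^2 := by
    have := dot_le v w
    have e : (l2 (v+w))^2 = (l2 v)^2 + 2 * (v ⬝ᵥ w) + (l2 w)^2 := by
      rw [l2sq, l2sq, l2sq]
      simp [dotProduct, Pi.add_apply, Finset.sum_add_distrib, Finset.mul_sum, sq]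
      rw [← Finset.sum_add_distrib, ← Finset.sum_add_distrib]
      apply Finset.sum_congr rfl; intros; ring
    nlinarith
  nlinarith [l2_nonneg (v+w), l2_nonneg v, l2_nonneg w]

lemma l2_sub_le {n : ℕ} (v w : Fin n → ℝ) : l2 (v - w) ≤ l2 v + l2 w := by
  have := l2_add_le v (-w)
  have e : l2 (-w) = l2 w := by unfold l2; congr 1; apply Finset.sum_congr rfl; intros; simp
  simpa [sub_eq_add_neg, e] using this

section Frame
variable {n p d : ℕ} (D : Matrix (Fin p) (Fin d) ℝ)

lemma adj_dot (x : Fin d → ℝ) (w : Fin p → ℝ) :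
    (D.mulVec x) ⬝ᵥ w = x ⬝ᵥ (D.transpose.mulVec w) := by
  rw [dotProduct_comm, Matrix.dotProduct_mulVec, ← Matrix.vecMul_transpose,
    dotProduct_comm]
  rfl

variable (hD : D * D.transpose = 1)
include hD

lemma frame_comp (x : Fin p → ℝ) : D.mulVec (D.transpose.mulVec x) = x := by
  rw [Matrix.mulVec_mulVec, hD, Matrix.one_mulVec]

lemma frame_iso (x : Fin p → ℝ) : l2 (D.transpose.mulVec x) = l2 x := by
  have h : (D.transpose.mulVec x) ⬝ᵥ (D.transpose.mulVec x) = x ⬝ᵥ x := by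
    rw [← adj_dot, frame_comp D hD]
  rw [l2, l2]
  congr 1
  have := h
  rw [dot_self, dot_self, l2sq, l2sq] at this
  exact this

lemma frame_contract (v : Fin d → ℝ) : l2 (D.mulVec v) ≤ l2 v := by
  have h : (l2 (D.mulVec v))^2 = v ⬝ᵥ (D.transpose.mulVec (D.mulVec v)) := by
    rw [← dot_self, adj_dot]
  have h2 : v ⬝ᵥ (D.transpose.mulVec (D.mulVec v)) ≤ l2 v * l2 (D.transpose.mulVec (D.mulVec v)) :=
    dot_le _ _
  rw [frame_iso D hD] at h2
  nlinarith [l2_nonneg (D.mulVec v), l2_nonneg v, h, h2]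

end Frame

-- Sparse lemmas
lemma sparse_mono {m : ℕ} {k k' : ℕ} (h : k ≤ k') {v : Fin m → ℝ} (hv : Sparse k v) :
    Sparse k' v := le_trans hv h

lemma sparse_restrict {m : ℕ} (S : Finset (Fin m)) (v : Fin m → ℝ) :
    Sparse S.card (restrict S v) := by
  apply Finset.card_le_card
  intro i hi
  by_contra hs
  simp [Finset.mem_filter, restrict, hs] at hi

lemma sparse_add_smul {m k : ℕ} {u w : Fin m → ℝ} (hu : Sparse k u) (hw : Sparse k w) (c : ℝ) :
    Sparse (2 * k) (u + c • w) := by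
  unfold Sparse at *
  have hsub : (Finset.univ.filter (fun i => (u + c • w) i ≠ 0)) ⊆
      (Finset.univ.filter (fun i => u i ≠ 0)) ∪ (Finset.univ.filter (fun i => w i ≠ 0)) := by
    intro i hi
    simp only [Finset.mem_filter, Finset.mem_union, Finset.mem_univ, true_and] at *
    by_contra hc
    push_neg at hc
    simp [hc.1, hc.2] at hi
  calc _ ≤ _ := Finset.card_le_card hsub
    _ ≤ _ := Finset.card_union_le _ _
    _ ≤ 2 * k := by omega

lemma sparse_l1_le {m k : ℕ} {v : Fin m → ℝ} (hv : Sparse k v) :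
    l1 v ≤ Real.sqrt k * l2 v := by
  classical
  set S := Finset.univ.filter (fun i => v i ≠ 0) with hS
  have h1 : l1 v = ∑ i ∈ S, |v i| := by
    rw [l1, ← Finset.sum_filter_add_sum_filter_not Finset.univ (fun i => v i ≠ 0)]
    have : ∑ i ∈ Finset.univ.filter (fun i => ¬ v i ≠ 0), |v i| = 0 := by
      apply Finset.sum_eq_zero; intro i hi
      simp only [Finset.mem_filter, not_not] at hi
      simp [hi.2]
    rw [this, add_zero]
  have h2 : (∑ i ∈ S, |v i|)^2 ≤ (S.card : ℝ) * ∑ i ∈ S, (v i)^2 := by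
    have := Finset.sum_mul_sq_le_sq_mul_sq S (fun _ => (1:ℝ)) (fun i => |v i|)
    simpa [sq_abs] using this
  have h3 : ∑ i ∈ S, (v i)^2 ≤ (l2 v)^2 := by
    rw [l2sq]
    exact Finset.sum_le_sum_of_subset_of_nonneg (Finset.subset_univ S) (by intros; positivity)
  have hcard : (S.card : ℝ) ≤ (k : ℝ) := by exact_mod_cast hv
  have : (l1 v)^2 ≤ (k : ℝ) * (l2 v)^2 := by
    rw [h1]
    nlinarith [Finset.sum_nonneg (fun i (_ : i ∈ S) => sq_nonneg (v i)), Nat.cast_nonneg (α := ℝ) S.card]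
  have hk : Real.sqrt k * l2 v = Real.sqrt ((k:ℝ) * (l2 v)^2) := by
    rw [Real.sqrt_mul (Nat.cast_nonneg k), Real.sqrt_sq (l2_nonneg v)]
  rw [hk]
  calc l1 v = Real.sqrt ((l1 v)^2) := (Real.sqrt_sq (l1_nonneg v)).symm
    _ ≤ _ := Real.sqrt_le_sqrt this

lemma sparse_l2sq_le {m k : ℕ} {v : Fin m → ℝ} (hv : Sparse k v) {α : ℝ}
    (hb : ∀ j, |v j| ≤ α) : (l2 v)^2 ≤ (k:ℝ) * α^2 := by
  classical
  set S := Finset.univ.filter (fun i => v i ≠ 0) with hS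
  have h1 : (l2 v)^2 = ∑ i ∈ S, (v i)^2 := by
    rw [l2sq, ← Finset.sum_filter_add_sum_filter_not Finset.univ (fun i => v i ≠ 0)]
    have : ∑ i ∈ Finset.univ.filter (fun i => ¬ v i ≠ 0), (v i)^2 = 0 := by
      apply Finset.sum_eq_zero; intro i hi
      simp only [Finset.mem_filter, not_not] at hi
      simp [hi.2]
    rw [this, add_zero]
  have h2 : ∑ i ∈ S, (v i)^2 ≤ ∑ _i ∈ S, α^2 := by
    apply Finset.sum_le_sum; intro i _
    have := hb i
    nlinarith [abs_nonneg (v i), sq_abs (v i)]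
  have hcard : (S.card : ℝ) ≤ (k : ℝ) := by exact_mod_cast hv
  rw [h1]
  calc _ ≤ _ := h2
    _ = (S.card : ℝ) * α^2 := by rw [Finset.sum_const, nsmul_eq_mul]
    _ ≤ (k:ℝ) * α^2 := by nlinarith [sq_nonneg α, hcard]

-- restrict lemmas
lemma restrict_add_compl {m : ℕ} (S : Finset (Fin m)) (v : Fin m → ℝ) :
    restrict S v + restrict Sᶜ v = v := by
  funext i
  by_cases h : i ∈ S <;> simp [restrict, h]

lemma l1_restrict {m : ℕ} (S : Finset (Fin m)) (v : Fin m → ℝ) :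
    l1 (restrict S v) = ∑ i ∈ S, |v i| := by
  rw [l1, ← Finset.sum_filter_add_sum_filter_not Finset.univ (fun i => i ∈ S)]
  have h1 : Finset.univ.filter (fun i => i ∈ S) = S := by ext i; simp
  have h2 : ∑ i ∈ Finset.univ.filter (fun i => ¬ i ∈ S), |restrict S v i| = 0 := by
    apply Finset.sum_eq_zero; intro i hi
    simp only [Finset.mem_filter] at hi
    simp [restrict, hi.2]
  rw [h2, add_zero, h1]
  apply Finset.sum_congr rfl
  intro i hi; simp [restrict, hi]

lemma l2sq_restrict {m : ℕ} (S : Finset (Fin m)) (v : Fin m → ℝ) :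
    (l2 (restrict S v))^2 = ∑ i ∈ S, (v i)^2 := by
  rw [l2sq, ← Finset.sum_filter_add_sum_filter_not Finset.univ (fun i => i ∈ S)]
  have h1 : Finset.univ.filter (fun i => i ∈ S) = S := by ext i; simp
  have h2 : ∑ i ∈ Finset.univ.filter (fun i => ¬ i ∈ S), (restrict S v i)^2 = 0 := by
    apply Finset.sum_eq_zero; intro i hi
    simp only [Finset.mem_filter] at hi
    simp [restrict, hi.2]
  rw [h2, add_zero, h1]
  apply Finset.sum_congr rfl
  intro i hi; simp [restrict, hi]

lemma l1_split {m : ℕ} (S : Finset (Fin m)) (v : Fin m → ℝ) :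
    l1 v = l1 (restrict S v) + l1 (restrict Sᶜ v) := by
  rw [l1_restrict, l1_restrict, l1]
  rw [← Finset.sum_filter_add_sum_filter_not Finset.univ (fun i => i ∈ S)]
  congr 1
  · apply Finset.sum_congr (by ext i; simp) (fun _ _ => rfl)
  · apply Finset.sum_congr (by ext i; simp) (fun _ _ => rfl)

lemma l2sq_split {m : ℕ} (S : Finset (Fin m)) (v : Fin m → ℝ) :
    (l2 v)^2 = (l2 (restrict S v))^2 + (l2 (restrict Sᶜ v))^2 := by
  rw [l2sq_restrict, l2sq_restrict, l2sq]
  rw [← Finset.sum_filter_add_sum_filter_not Finset.univ (fun i => i ∈ S)]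
  congr 1
  · apply Finset.sum_congr (by ext i; simp) (fun _ _ => rfl)
  · apply Finset.sum_congr (by ext i; simp) (fun _ _ => rfl)

lemma restrict_dot {m : ℕ} (S : Finset (Fin m)) (v : Fin m → ℝ) :
    (restrict S v) ⬝ᵥ v = (l2 (restrict S v))^2 := by
  rw [← dot_self]
  unfold dotProduct
  apply Finset.sum_congr rfl
  intro i _
  by_cases h : i ∈ S <;> simp [restrict, h]

-- top-k existence
lemma exists_topk {m : ℕ} (a : Fin m → ℝ) (k : ℕ) (hk : k ≤ m) :
    ∃ T : Finset (Fin m), IsLargestK k a T := by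
  induction k with
  | zero => exact ⟨∅, by simp [IsLargestK]⟩
  | succ k ih =>
    obtain ⟨T, hT⟩ := ih (by omega)
    have hne : (Tᶜ : Finset (Fin m)).Nonempty := by
      rw [← Finset.card_pos, Finset.card_compl, Fintype.card_fin, hT.1]
      omega
    obtain ⟨i, hi, hmax⟩ := Finset.exists_max_image Tᶜ (fun j => |a j|) hne
    refine ⟨insert i T, ?_, ?_⟩
    · rw [Finset.card_insert_of_notMem (by simpa using hi), hT.1]
    · intro i' hi' j hj
      rcases Finset.mem_insert.mp hi' with rfl | hiT
      · exact hmax j (by simp [Finset.mem_insert] at hj; simp [hj.2])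
      · exact hT.2 i' hiT j (fun hjT => hj (Finset.mem_insert_of_mem hjT))

-- head comparison: over any Ω with card ≤ k = T.card
lemma head_le {m : ℕ} {a : Fin m → ℝ} {k : ℕ} {T Ω : Finset (Fin m)}
    (hT : IsLargestK k a T) (hΩ : Ω.card = k) :
    ∑ i ∈ Ω, |a i| ≤ ∑ i ∈ T, |a i| := by
  have hsplitΩ : ∑ i ∈ Ω, |a i| = ∑ i ∈ Ω ∩ T, |a i| + ∑ i ∈ Ω \ T, |a i| :=
    (Finset.sum_inter_add_sum_sdiff Ω T _).symm
  have hsplitT : ∑ i ∈ T, |a i| = ∑ i ∈ T ∩ Ω, |a i| + ∑ i ∈ T \ Ω, |a i| :=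
    (Finset.sum_inter_add_sum_sdiff T Ω _).symm
  rw [hsplitΩ, hsplitT, Finset.inter_comm]
  gcongr ?_ + ?_
  · exact le_refl _
  · -- ∑ over Ω \ T ≤ ∑ over T \ Ω
    have hcard : (Ω \ T).card = (T \ Ω).card := by
      have h1 := Finset.card_inter_add_card_sdiff Ω T
      have h2 := Finset.card_inter_add_card_sdiff T Ω
      rw [Finset.inter_comm] at h2
      have h3 := hT.1
      omega
    rcases Finset.eq_empty_or_nonempty (T \ Ω) with he | hne
    · have : (Ω \ T) = ∅ := Finset.card_eq_zero.mp (by rw [hcard, he]; simp)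
      simp [this, he]
    · obtain ⟨i₀, hi₀, hmin⟩ := Finset.exists_min_image (T \ Ω) (fun j => |a j|) hne
      have hstep : ∀ j ∈ Ω \ T, |a j| ≤ |a i₀| := by
        intro j hj
        exact hT.2 i₀ (Finset.mem_sdiff.mp hi₀).1 j (Finset.mem_sdiff.mp hj).2
      calc ∑ i ∈ Ω \ T, |a i| ≤ ∑ _i ∈ Ω \ T, |a i₀| := Finset.sum_le_sum hstep
        _ = (Ω \ T).card * |a i₀| := by rw [Finset.sum_const, nsmul_eq_mul]
        _ = (T \ Ω).card * |a i₀| := by rw [hcard]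
        _ = ∑ _i ∈ T \ Ω, |a i₀| := by rw [Finset.sum_const, nsmul_eq_mul]
        _ ≤ ∑ i ∈ T \ Ω, |a i| := Finset.sum_le_sum (fun j hj => hmin j hj)

section Polytope
variable {m : ℕ}

-- modify two coordinates by scaling
noncomputable def mod2 (v : Fin m → ℝ) (j₁ j₂ : Fin m) (c₁ c₂ : ℝ) : Fin m → ℝ :=
  fun i => if i = j₁ then c₁ * v j₁ else if i = j₂ then c₂ * v j₂ else v i

lemma sum_split3 {M : Type*} [AddCommMonoid M] (j₁ j₂ : Fin m) (hne : j₁ ≠ j₂)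
    (g : Fin m → M) :
    ∑ i, g i = g j₁ + g j₂ + ∑ i ∈ (Finset.univ.erase j₁).erase j₂, g i := by
  have h2 : j₂ ∈ Finset.univ.erase j₁ := Finset.mem_erase.mpr ⟨hne.symm, Finset.mem_univ _⟩
  rw [← Finset.sum_erase_add Finset.univ g (Finset.mem_univ j₁),
      ← Finset.sum_erase_add (Finset.univ.erase j₁) g h2]
  abel

lemma mod2_sum {M : Type*} [AddCommMonoid M] (F : ℝ → M) (v : Fin m → ℝ) (j₁ j₂ : Fin m)
    (hne : j₁ ≠ j₂) (c₁ c₂ : ℝ) :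
    ∑ i, F (mod2 v j₁ j₂ c₁ c₂ i)
      = F (c₁ * v j₁) + F (c₂ * v j₂) + ∑ i ∈ (Finset.univ.erase j₁).erase j₂, F (v i) := by
  rw [sum_split3 j₁ j₂ hne (fun i => F (mod2 v j₁ j₂ c₁ c₂ i))]
  congr 1
  · congr 1
    · simp [mod2]
    · simp [mod2, hne.symm]
  · apply Finset.sum_congr rfl
    intro i hi
    simp only [Finset.mem_erase] at hi
    simp [mod2, hi.1, hi.2.1]

noncomputable def pwt (α : ℝ) (t : ℝ) : ℕ := if t = 0 then 0 else if |t| = α then 1 else 2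

lemma pwt_le (α t : ℝ) : pwt α t ≤ 2 := by unfold pwt; split <;> [omega; skip]; split <;> omega

lemma pwt_zero (α : ℝ) : pwt α 0 = 0 := by simp [pwt]

lemma pwt_eq_two (α t : ℝ) (h0 : t ≠ 0) (hα : |t| ≠ α) : pwt α t = 2 := by
  simp [pwt, h0, hα]

lemma pwt_eq_one (α t : ℝ) (hα : |t| = α) (hα0 : 0 < α) : pwt α t = 1 := by
  have ht : t ≠ 0 := by intro h; rw [h, abs_zero] at hα; linarith
  simp [pwt, ht, hα]

noncomputable def pmeas (α : ℝ) (v : Fin m → ℝ) : ℕ := ∑ j, pwt α (v j)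

lemma polytope_aux (s : ℕ) (hs : 1 ≤ s) (α : ℝ) (hα : 0 ≤ α) :
    ∀ N : ℕ, ∀ v : Fin m → ℝ, pmeas α v ≤ N → (∀ j, |v j| ≤ α) → (∑ j, |v j|) ≤ s * α →
    v ∈ convexHull ℝ {u : Fin m → ℝ | Sparse s u ∧ ∀ j, |u j| ≤ α} := by
  intro N
  induction N with
  | zero =>
    intro v hμ hbd hl1
    have hv : v = 0 := by
      funext j
      simp only [Pi.zero_apply]
      by_contra hj
      have h1 : 1 ≤ pwt α (v j) := by
        unfold pwt
        rw [if_neg hj]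
        split <;> omega
      have h2 : pwt α (v j) ≤ pmeas α v := by
        exact Finset.single_le_sum (f := fun j => pwt α (v j)) (fun _ _ => Nat.zero_le _)
          (Finset.mem_univ j)
      omega
    apply subset_convexHull
    refine ⟨?_, hbd⟩
    rw [hv]
    unfold Sparse
    simp
  | succ N ih =>
    intro v hμ hbd hl1
    by_cases hbase : (Finset.univ.filter (fun i => v i ≠ 0)).card ≤ s
    · exact subset_convexHull _ _ ⟨hbase, hbd⟩
    push_neg at hbase
    set supp := Finset.univ.filter (fun i => v i ≠ 0) with hsupp
    have hsuppne : supp.Nonempty := Finset.card_pos.mp (by omega)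
    obtain ⟨j₁, hj₁s, hmin₁⟩ := Finset.exists_min_image supp (fun j => |v j|) hsuppne
    have hj₁ : v j₁ ≠ 0 := (Finset.mem_filter.mp hj₁s).2
    set supp' := supp.erase j₁ with hsupp'
    have hcard' : s ≤ supp'.card := by
      rw [hsupp', Finset.card_erase_of_mem hj₁s]; omega
    have hsupp'ne : supp'.Nonempty := Finset.card_pos.mp (by omega)
    obtain ⟨j₂, hj₂s', hmin₂⟩ := Finset.exists_min_image supp' (fun j => |v j|) hsupp'ne
    have hne : j₁ ≠ j₂ := fun h => (Finset.mem_erase.mp hj₂s').1 h.symm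
    have hj₂s : j₂ ∈ supp := (Finset.mem_erase.mp hj₂s').2
    have hj₂ : v j₂ ≠ 0 := (Finset.mem_filter.mp hj₂s).2
    set m₁ := |v j₁| with hm₁
    set m₂ := |v j₂| with hm₂
    have hm₁pos : 0 < m₁ := abs_pos.mpr hj₁
    have hm₂pos : 0 < m₂ := abs_pos.mpr hj₂
    have hm₁₂ : m₁ ≤ m₂ := hmin₁ j₂ hj₂s
    have hsum_supp : ∑ j, |v j| = ∑ j ∈ supp, |v j| := by
      rw [← Finset.sum_filter_add_sum_filter_not Finset.univ (fun i => v i ≠ 0) (fun j => |v j|)]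
      have : ∑ j ∈ Finset.univ.filter (fun i => ¬ v i ≠ 0), |v j| = 0 := by
        apply Finset.sum_eq_zero; intro i hi
        simp only [Finset.mem_filter, not_not] at hi
        simp [hi.2]
      rw [this, add_zero]
    have hm₂α : m₂ < α := by
      by_contra hge
      push_neg at hge
      have hall : ∀ j ∈ supp', α ≤ |v j| := fun j hj => le_trans hge (hmin₂ j hj)
      have h1 : (s : ℝ) * α ≤ (supp'.card : ℝ) * α := by
        apply mul_le_mul_of_nonneg_right _ hα
        exact_mod_cast hcard'
      have h2 : (supp'.card : ℝ) * α ≤ ∑ j ∈ supp', |v j| := by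
        calc (supp'.card : ℝ) * α = ∑ _j ∈ supp', α := by rw [Finset.sum_const, nsmul_eq_mul]
          _ ≤ _ := Finset.sum_le_sum hall
      have h3 : ∑ j ∈ supp, |v j| = m₁ + ∑ j ∈ supp', |v j| := by
        rw [hsupp', ← Finset.sum_erase_add supp _ hj₁s]; ring
      have h4 := hl1
      rw [hsum_supp, h3] at h4
      nlinarith
    have hαpos : 0 < α := lt_of_le_of_lt hm₂pos.le hm₂α
    have hm₁α : m₁ < α := lt_of_le_of_lt hm₁₂ hm₂α
    set tp := min m₂ (α - m₁) with htp
    set tm := min m₁ (α - m₂) with htm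
    have htppos : 0 < tp := lt_min hm₂pos (by linarith)
    have htmpos : 0 < tm := lt_min hm₁pos (by linarith)
    have htpm₂ : tp ≤ m₂ := min_le_left _ _
    have htpα : tp ≤ α - m₁ := min_le_right _ _
    have htmm₁ : tm ≤ m₁ := min_le_left _ _
    have htmα : tm ≤ α - m₂ := min_le_right _ _
    set x := mod2 v j₁ j₂ ((m₁ + tp)/m₁) ((m₂ - tp)/m₂) with hx
    set y := mod2 v j₁ j₂ ((m₁ - tm)/m₁) ((m₂ + tm)/m₂) with hy
    have habs : ∀ (b : ℝ) (j : Fin m), 0 ≤ b → v j ≠ 0 → |b / |v j| * v j| = b := by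
      intro b j hb hvj
      rw [abs_mul, abs_div, abs_abs, div_mul_eq_mul_div, mul_div_assoc,
        div_self (abs_ne_zero.mpr hvj), mul_one, abs_of_nonneg hb]
    have hxv₁ : x j₁ = (m₁ + tp)/m₁ * v j₁ := by simp [hx, mod2]
    have hxv₂ : x j₂ = (m₂ - tp)/m₂ * v j₂ := by simp [hx, mod2, hne.symm]
    have hyv₁ : y j₁ = (m₁ - tm)/m₁ * v j₁ := by simp [hy, mod2]
    have hyv₂ : y j₂ = (m₂ + tm)/m₂ * v j₂ := by simp [hy, mod2, hne.symm]
    have hxj₁ : |x j₁| = m₁ + tp := by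
      rw [hxv₁, hm₁]; exact habs _ _ (by rw [← hm₁]; linarith) hj₁
    have hxj₂ : |x j₂| = m₂ - tp := by
      rw [hxv₂, hm₂]; exact habs _ _ (by rw [← hm₂]; linarith) hj₂
    have hyj₁ : |y j₁| = m₁ - tm := by
      rw [hyv₁, hm₁]; exact habs _ _ (by rw [← hm₁]; linarith) hj₁
    have hyj₂ : |y j₂| = m₂ + tm := by
      rw [hyv₂, hm₂]; exact habs _ _ (by rw [← hm₂]; linarith) hj₂
    have hxother : ∀ j, j ≠ j₁ → j ≠ j₂ → x j = v j := by
      intro j h1 h2; simp [hx, mod2, h1, h2]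
    have hyother : ∀ j, j ≠ j₁ → j ≠ j₂ → y j = v j := by
      intro j h1 h2; simp [hy, mod2, h1, h2]
    have hxbd : ∀ j, |x j| ≤ α := by
      intro j
      by_cases h1 : j = j₁
      · rw [h1, hxj₁]; linarith
      by_cases h2 : j = j₂
      · rw [h2, hxj₂]; linarith
      · rw [hxother j h1 h2]; exact hbd j
    have hybd : ∀ j, |y j| ≤ α := by
      intro j
      by_cases h1 : j = j₁
      · rw [h1, hyj₁]; linarith
      by_cases h2 : j = j₂
      · rw [h2, hyj₂]; linarith
      · rw [hyother j h1 h2]; exact hbd j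
    have hvsplit := sum_split3 j₁ j₂ hne (fun j => |v j|)
    have hxsplit := sum_split3 j₁ j₂ hne (fun j => |x j|)
    have hysplit := sum_split3 j₁ j₂ hne (fun j => |y j|)
    have hrestx : ∑ j ∈ (Finset.univ.erase j₁).erase j₂, |x j| =
        ∑ j ∈ (Finset.univ.erase j₁).erase j₂, |v j| := by
      apply Finset.sum_congr rfl
      intro j hj
      simp only [Finset.mem_erase] at hj
      rw [hxother j hj.2.1 hj.1]
    have hresty : ∑ j ∈ (Finset.univ.erase j₁).erase j₂, |y j| =
        ∑ j ∈ (Finset.univ.erase j₁).erase j₂, |v j| := by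
      apply Finset.sum_congr rfl
      intro j hj
      simp only [Finset.mem_erase] at hj
      rw [hyother j hj.2.1 hj.1]
    have hxl1 : ∑ j, |x j| ≤ s * α := by
      rw [hxsplit, hrestx, hxj₁, hxj₂]
      rw [hvsplit] at hl1
      linarith
    have hyl1 : ∑ j, |y j| ≤ s * α := by
      rw [hysplit, hresty, hyj₁, hyj₂]
      rw [hvsplit] at hl1
      linarith
    -- measure decrease
    have hvsplitw := sum_split3 j₁ j₂ hne (fun j => pwt α (v j))
    have hxsplitw := sum_split3 j₁ j₂ hne (fun j => pwt α (x j))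
    have hysplitw := sum_split3 j₁ j₂ hne (fun j => pwt α (y j))
    have hrestxw : ∑ j ∈ (Finset.univ.erase j₁).erase j₂, pwt α (x j) =
        ∑ j ∈ (Finset.univ.erase j₁).erase j₂, pwt α (v j) := by
      apply Finset.sum_congr rfl
      intro j hj
      simp only [Finset.mem_erase] at hj
      rw [hxother j hj.2.1 hj.1]
    have hrestyw : ∑ j ∈ (Finset.univ.erase j₁).erase j₂, pwt α (y j) =
        ∑ j ∈ (Finset.univ.erase j₁).erase j₂, pwt α (v j) := by
      apply Finset.sum_congr rfl
      intro j hj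
      simp only [Finset.mem_erase] at hj
      rw [hyother j hj.2.1 hj.1]
    have hwv₁ : pwt α (v j₁) = 2 := pwt_eq_two α _ hj₁ (by rw [← hm₁]; intro h; linarith)
    have hwv₂ : pwt α (v j₂) = 2 := pwt_eq_two α _ hj₂ (by rw [← hm₂]; intro h; linarith)
    have hxw : pwt α (x j₁) + pwt α (x j₂) ≤ 3 := by
      rcases min_choice m₂ (α - m₁) with hc | hc
      · have : x j₂ = 0 := by
          have h0 : |x j₂| = 0 := by rw [hxj₂, htp, hc]; ring
          exact abs_eq_zero.mp h0
        rw [this, pwt_zero]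
        have := pwt_le α (x j₁)
        omega
      · have h1 : |x j₁| = α := by rw [hxj₁, htp, hc]; ring
        rw [pwt_eq_one α _ h1 hαpos]
        have := pwt_le α (x j₂)
        omega
    have hyw : pwt α (y j₁) + pwt α (y j₂) ≤ 3 := by
      rcases min_choice m₁ (α - m₂) with hc | hc
      · have : y j₁ = 0 := by
          have h0 : |y j₁| = 0 := by rw [hyj₁, htm, hc]; ring
          exact abs_eq_zero.mp h0
        rw [this, pwt_zero]
        have := pwt_le α (y j₂)
        omega
      · have h1 : |y j₂| = α := by rw [hyj₂, htm, hc]; ring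
        rw [pwt_eq_one α _ h1 hαpos]
        have := pwt_le α (y j₁)
        omega
    have hμx : pmeas α x ≤ N := by
      have e1 : pmeas α v = pwt α (v j₁) + pwt α (v j₂) +
          ∑ j ∈ (Finset.univ.erase j₁).erase j₂, pwt α (v j) := hvsplitw
      have e2 : pmeas α x = pwt α (x j₁) + pwt α (x j₂) +
          ∑ j ∈ (Finset.univ.erase j₁).erase j₂, pwt α (x j) := hxsplitw
      rw [hrestxw] at e2
      omega
    have hμy : pmeas α y ≤ N := by
      have e1 : pmeas α v = pwt α (v j₁) + pwt α (v j₂) +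
          ∑ j ∈ (Finset.univ.erase j₁).erase j₂, pwt α (v j) := hvsplitw
      have e2 : pmeas α y = pwt α (y j₁) + pwt α (y j₂) +
          ∑ j ∈ (Finset.univ.erase j₁).erase j₂, pwt α (y j) := hysplitw
      rw [hrestyw] at e2
      omega
    have hxmem := ih x hμx hxbd hxl1
    have hymem := ih y hμy hybd hyl1
    -- v is a convex combination of x and y
    have hsum : 0 < tm + tp := by linarith
    have hcomb : (tm/(tm+tp)) • x + (tp/(tm+tp)) • y = v := by
      funext j
      simp only [Pi.add_apply, Pi.smul_apply, smul_eq_mul]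
      by_cases h1 : j = j₁
      · rw [h1, hxv₁, hyv₁]
        field_simp
        ring
      by_cases h2 : j = j₂
      · rw [h2, hxv₂, hyv₂]
        field_simp
        ring
      · rw [hxother j h1 h2, hyother j h1 h2]
        field_simp
    have := (convex_convexHull ℝ {u : Fin m → ℝ | Sparse s u ∧ ∀ j, |u j| ≤ α})
      hxmem hymem (le_of_lt (div_pos htmpos hsum)) (le_of_lt (div_pos htppos hsum))
      (by field_simp)
    rw [hcomb] at this
    exact this
end Polytope

-- expansion helpers
lemma l2sq_add_smul {q : ℕ} (u w : Fin q → ℝ) (c : ℝ) :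
    (l2 (u + c • w))^2 = (l2 u)^2 + 2*c*(u ⬝ᵥ w) + c^2 * (l2 w)^2 := by
  rw [← dot_self, ← dot_self, ← dot_self]
  rw [add_dotProduct, dotProduct_add, dotProduct_add,
    dotProduct_smul, smul_dotProduct, smul_dotProduct,
    dotProduct_smul, dotProduct_comm w u]
  simp [smul_eq_mul]
  ring

lemma dot_sum {q : ℕ} {ι : Type} (t : Finset ι) (X : Fin q → ℝ) (f : ι → Fin q → ℝ) :
    X ⬝ᵥ (∑ i ∈ t, f i) = ∑ i ∈ t, X ⬝ᵥ (f i) := by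
  unfold dotProduct
  rw [Finset.sum_comm]
  apply Finset.sum_congr rfl
  intro j _
  rw [Finset.sum_apply, Finset.mul_sum]

lemma mulVec_sum' {q r : ℕ} {ι : Type} (t : Finset ι) (M : Matrix (Fin q) (Fin r) ℝ)
    (f : ι → Fin r → ℝ) :
    M.mulVec (∑ i ∈ t, f i) = ∑ i ∈ t, M.mulVec (f i) := by
  funext j
  rw [Finset.sum_apply]
  unfold Matrix.mulVec dotProduct
  rw [Finset.sum_comm]
  apply Finset.sum_congr rfl
  intro i _
  rw [Finset.sum_apply, Finset.mul_sum]

-- quadratic root bound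
lemma quad_bound (δ ε A η : ℝ) (hδ0 : 0 ≤ δ) (hδ : δ < 2/3) (hA : 0 ≤ A) (hε : 0 ≤ ε)
    (hη : 0 ≤ η)
    (hkey : (1-δ)*A^2 ≤ 2*Real.sqrt (1+δ)*A*ε + (δ/2)*(A+η)^2) :
    A ≤ (4*Real.sqrt (1+δ)*ε + 2*δ*η + Real.sqrt (δ*(2-3*δ))*η)/(2-3*δ) := by
  set c := Real.sqrt (1+δ) with hc
  set s := Real.sqrt (δ*(2-3*δ)) with hsdef
  have hQ : (0:ℝ) < 2-3*δ := by linarith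
  have hc0 : 0 ≤ c := Real.sqrt_nonneg _
  have hs0 : 0 ≤ s := Real.sqrt_nonneg _
  have hs2 : s^2 = δ*(2-3*δ) := Real.sq_sqrt (by nlinarith)
  set B := 4*c*ε + 2*δ*η with hB
  have hB0 : 0 ≤ B := by positivity
  have hmain : (2-3*δ)*A^2 ≤ B*A + δ*η^2 := by rw [hB]; nlinarith
  by_contra hcon
  push_neg at hcon
  have hcon' : (4*c*ε + 2*δ*η + s*η)/(2-3*δ) < A := hcon
  have hQA : B + s*η < (2-3*δ)*A := by
    rw [div_lt_iff₀ hQ] at hcon'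
    rw [hB]
    nlinarith
  nlinarith [mul_nonneg hs0 hη, sq_nonneg (s*η), mul_le_mul_of_nonneg_left hQA.le (le_of_lt hQ)]

lemma le_of_sq_le_sq' (a b : ℝ) (hb : 0 ≤ b) (h : a^2 ≤ b^2) (ha : 0 ≤ a) : a ≤ b := by
  nlinarith

set_option maxHeartbeats 2000000 in
theorem drip_recovery {n p d k : ℕ} (hk : 0 < k) (hkd : k ≤ d)
    (Φ : Matrix (Fin n) (Fin p) ℝ) (D : Matrix (Fin p) (Fin d) ℝ)
    (hD : D * D.transpose = 1)
    (δ : ℝ) (hδ0 : 0 ≤ δ) (hδ : δ < 2 / 3) (hRIP : DRIP Φ D (2 * k) δ)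
    (β βhat : Fin p → ℝ) (z y : Fin n → ℝ) (ε : ℝ)
    (hy : y = Φ.mulVec β + z) (hz : l2 z ≤ ε)
    (hfeas : l2 (y - Φ.mulVec βhat) ≤ ε)
    (hmin : ∀ γ : Fin p → ℝ, l2 (y - Φ.mulVec γ) ≤ ε →
      l1 (D.transpose.mulVec βhat) ≤ l1 (D.transpose.mulVec γ))
    (Ω : Finset (Fin d)) (hΩ : IsLargestK k (D.transpose.mulVec β) Ω) :
    l2 (β - βhat) ≤ (8 * Real.sqrt (1 + δ)) / (3 * (2 / 3 - δ)) * ε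
      + (2 + 2 * (4 * δ + Real.sqrt (6 * δ * (2 / 3 - δ))) / (3 * (2 / 3 - δ)))
        * (l1 (restrict Ωᶜ (D.transpose.mulVec β)) / Real.sqrt k) := by
  classical
  have hkR : (0:ℝ) < k := by exact_mod_cast hk
  set sk := Real.sqrt k with hsk
  have hsk0 : 0 < sk := Real.sqrt_pos.mpr hkR
  have hsk2 : sk^2 = k := Real.sq_sqrt hkR.le
  have hε0 : 0 ≤ ε := le_trans (l2_nonneg z) hz
  set hv := β - βhat with hhv
  set av := D.transpose.mulVec hv with hav
  set bv := D.transpose.mulVec β with hbv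
  set e := l1 (restrict Ωᶜ bv) with he
  have he0 : 0 ≤ e := l1_nonneg _
  set η := 2*e/sk with hη
  have hη0 : 0 ≤ η := by positivity
  -- cone constraint
  have hβfeas : l2 (y - Φ.mulVec β) ≤ ε := by
    rw [hy]; simpa using hz
  have hcone0 : l1 (D.transpose.mulVec βhat) ≤ l1 bv := hmin β hβfeas
  have hhat : D.transpose.mulVec βhat = bv - av := by
    rw [hbv, hav, hhv, Matrix.mulVec_sub]
    abel
  have hconeΩ : ∑ i ∈ Ωᶜ, |av i| ≤ (∑ i ∈ Ω, |av i|) + 2*e := by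
    have h1 : l1 (bv - av) ≤ l1 bv := by rw [← hhat]; exact hcone0
    rw [l1_split Ω (bv - av), l1_split Ω bv, l1_restrict, l1_restrict, l1_restrict,
      l1_restrict] at h1
    have h2 : ∑ i ∈ Ω, |bv i| - ∑ i ∈ Ω, |av i| ≤ ∑ i ∈ Ω, |(bv - av) i| := by
      rw [← Finset.sum_sub_distrib]
      apply Finset.sum_le_sum
      intro i _
      simp only [Pi.sub_apply]
      exact abs_sub_abs_le_abs_sub _ _
    have h3 : ∑ i ∈ Ωᶜ, |av i| - ∑ i ∈ Ωᶜ, |bv i| ≤ ∑ i ∈ Ωᶜ, |(bv - av) i| := by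
      rw [← Finset.sum_sub_distrib]
      apply Finset.sum_le_sum
      intro i _
      simp only [Pi.sub_apply]
      calc |av i| - |bv i| ≤ |av i - bv i| := abs_sub_abs_le_abs_sub _ _
        _ = |bv i - av i| := abs_sub_comm _ _
    have h4 : e = ∑ i ∈ Ωᶜ, |bv i| := by rw [he, l1_restrict]
    linarith
  -- top-k set for av
  obtain ⟨T, hT⟩ := exists_topk av k hkd
  set aT := restrict T av with haT
  set aC := restrict Tᶜ av with haC
  set A := l2 aT with hA
  have hA0 : 0 ≤ A := l2_nonneg _
  have hsparse_aT : Sparse k aT := by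
    have := sparse_restrict T av
    rwa [hT.1] at this
  have hl1aT : l1 aT ≤ sk * A := sparse_l1_le hsparse_aT
  have hl1aT0 : 0 ≤ l1 aT := l1_nonneg _
  -- head and tail comparisons
  have hhead : ∑ i ∈ Ω, |av i| ≤ l1 aT := by
    rw [haT, l1_restrict]
    exact head_le hT hΩ.1
  have htail : l1 aC ≤ ∑ i ∈ Ωᶜ, |av i| := by
    have h1 := l1_split T av
    have h2 := l1_split Ω av
    rw [← haT, ← haC] at h1
    rw [l1_restrict, l1_restrict] at h2
    have h3 : ∑ i ∈ Ω, |av i| ≤ l1 aT := hhead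
    linarith
  have hconeT : l1 aC ≤ l1 aT + 2*e := by linarith
  -- ∞ bound outside T
  have hinfty : ∀ j, j ∉ T → (k:ℝ) * |av j| ≤ l1 aT := by
    intro j hj
    rw [haT, l1_restrict]
    have h1 : ∀ i ∈ T, |av j| ≤ |av i| := fun i hi => hT.2 i hi j hj
    have h2 := Finset.card_nsmul_le_sum T (fun i => |av i|) (|av j|) h1
    rw [hT.1] at h2
    simpa [nsmul_eq_mul] using h2
  set α := (l1 aT + 2*e)/k with hα
  have hα0 : 0 ≤ α := by positivity
  have haCbd : ∀ j, |aC j| ≤ α := by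
    intro j
    by_cases hj : j ∈ T
    · have : aC j = 0 := by simp [haC, restrict, hj]
      rw [this]; simpa using hα0
    · have h1 : aC j = av j := by simp [haC, restrict, hj]
      rw [h1, hα]
      rw [le_div_iff₀ hkR]
      have := hinfty j hj
      linarith [mul_comm (|av j|) (k:ℝ)]
  have haCl1 : ∑ j, |aC j| ≤ (k:ℝ) * α := by
    have h1 : ∑ j, |aC j| = l1 aC := rfl
    rw [h1, hα]
    rw [mul_div_cancel₀ _ (ne_of_gt hkR)]
    exact hconeT
  -- polytope decomposition
  have hhull := polytope_aux k hk α hα0 (pmeas α aC) aC le_rfl haCbd haCl1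
  rw [convexHull_eq] at hhull
  obtain ⟨ι, t, w, zv, hw0, hw1, hzmem, hcm⟩ := hhull
  have hcm' : ∑ i ∈ t, w i • zv i = aC := by
    rw [← Finset.centerMass_eq_of_sum_1 _ _ hw1]; exact hcm
  -- frame facts
  have hDa : D.mulVec av = hv := by rw [hav]; exact frame_comp D hD hv
  have hsplitav : aT + aC = av := restrict_add_compl T av
  -- Φ h is small
  have hΦh : l2 (Φ.mulVec (D.mulVec av)) ≤ 2*ε := by
    rw [hDa]
    have h1 : Φ.mulVec hv = (y - Φ.mulVec βhat) - z := by
      rw [hhv, Matrix.mulVec_sub, hy]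
      funext i
      simp [Pi.sub_apply, Pi.add_apply]
      ring
    rw [h1]
    calc l2 ((y - Φ.mulVec βhat) - z) ≤ l2 (y - Φ.mulVec βhat) + l2 z := l2_sub_le _ _
      _ ≤ 2*ε := by linarith
  -- notation for main chain
  set X := Φ.mulVec (D.mulVec aT) with hX
  set Hv := Φ.mulVec (D.mulVec av) with hHv
  set W := ∑ i ∈ t, w i * (l2 (D.mulVec (zv i)))^2 with hW
  set V := ∑ i ∈ t, w i * (l2 (Φ.mulVec (D.mulVec (zv i))))^2 with hV
  -- RIP facts
  have hRIP_aT := hRIP aT (sparse_mono (by omega) hsparse_aT)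
  have hRIP_z : ∀ i ∈ t, (l2 (Φ.mulVec (D.mulVec (zv i))))^2 ≤ (1+δ)*(l2 (D.mulVec (zv i)))^2 :=
    fun i hi => (hRIP (zv i) (sparse_mono (by omega) (hzmem i hi).1)).2
  have hRIP_p : ∀ i ∈ t, (1-δ)*(l2 (D.mulVec (aT + (2⁻¹:ℝ) • zv i)))^2 ≤
      (l2 (Φ.mulVec (D.mulVec (aT + (2⁻¹:ℝ) • zv i))))^2 :=
    fun i hi => (hRIP _ (sparse_add_smul hsparse_aT (hzmem i hi).1 _)).1
  -- linear expansions
  have hDlin : ∀ i, D.mulVec (aT + (2⁻¹:ℝ) • zv i) = D.mulVec aT + (2⁻¹:ℝ) • D.mulVec (zv i) := by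
    intro i
    rw [Matrix.mulVec_add, Matrix.mulVec_smul]
  have hΦDlin : ∀ i, Φ.mulVec (D.mulVec (aT + (2⁻¹:ℝ) • zv i)) =
      X + (2⁻¹:ℝ) • Φ.mulVec (D.mulVec (zv i)) := by
    intro i
    rw [hDlin i, Matrix.mulVec_add, Matrix.mulVec_smul, hX]
  -- dot product identities
  have hdot_aT : (D.mulVec aT) ⬝ᵥ (D.mulVec aC) = A^2 - (l2 (D.mulVec aT))^2 := by
    have h1 : (D.mulVec aT) ⬝ᵥ (D.mulVec av) = A^2 := by
      rw [hDa, adj_dot, ← hav]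
      exact restrict_dot T av
    have h3 : D.mulVec av = D.mulVec aT + D.mulVec aC := by
      rw [← hsplitav, Matrix.mulVec_add]
    rw [h3, dotProduct_add, dot_self] at h1
    linarith
  have hΦaC : Φ.mulVec (D.mulVec aC) = ∑ i ∈ t, w i • Φ.mulVec (D.mulVec (zv i)) := by
    rw [← hcm', mulVec_sum', mulVec_sum']
    apply Finset.sum_congr rfl
    intro i _
    rw [Matrix.mulVec_smul, Matrix.mulVec_smul]
  have hDaC : D.mulVec aC = ∑ i ∈ t, w i • D.mulVec (zv i) := by
    rw [← hcm', mulVec_sum']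
    apply Finset.sum_congr rfl
    intro i _
    rw [Matrix.mulVec_smul]
  have hXdot : X ⬝ᵥ (Φ.mulVec (D.mulVec aC)) = X ⬝ᵥ Hv - (l2 X)^2 := by
    have h1 : Hv = X + Φ.mulVec (D.mulVec aC) := by
      rw [hHv, hX, ← hsplitav, Matrix.mulVec_add, Matrix.mulVec_add]
    rw [h1, dotProduct_add, dot_self]
    ring
  -- weighted sum expansions
  have hS1 : ∑ i ∈ t, w i * (l2 (Φ.mulVec (D.mulVec (aT + (2⁻¹:ℝ) • zv i))))^2
      = X ⬝ᵥ Hv + 4⁻¹ * V := by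
    have hexp : ∀ i ∈ t, w i * (l2 (Φ.mulVec (D.mulVec (aT + (2⁻¹:ℝ) • zv i))))^2
        = w i * (l2 X)^2 + (w i * (X ⬝ᵥ Φ.mulVec (D.mulVec (zv i))))
          + 4⁻¹ * (w i * (l2 (Φ.mulVec (D.mulVec (zv i))))^2) := by
      intro i _
      rw [hΦDlin i, l2sq_add_smul]
      ring
    rw [Finset.sum_congr rfl hexp, Finset.sum_add_distrib, Finset.sum_add_distrib]
    have h1 : ∑ i ∈ t, w i * (l2 X)^2 = (l2 X)^2 := by
      rw [← Finset.sum_mul, hw1, one_mul]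
    have h2 : ∑ i ∈ t, w i * (X ⬝ᵥ Φ.mulVec (D.mulVec (zv i))) = X ⬝ᵥ Hv - (l2 X)^2 := by
      rw [← hXdot, hΦaC, dot_sum]
      apply Finset.sum_congr rfl
      intro i _
      rw [dotProduct_smul, smul_eq_mul]
    have h3 : ∑ i ∈ t, 4⁻¹ * (w i * (l2 (Φ.mulVec (D.mulVec (zv i))))^2) = 4⁻¹ * V := by
      rw [hV, Finset.mul_sum]
    rw [h1, h2, h3]
    ring
  have hS2 : ∑ i ∈ t, w i * (l2 (D.mulVec (aT + (2⁻¹:ℝ) • zv i)))^2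
      = A^2 + 4⁻¹ * W := by
    have hexp : ∀ i ∈ t, w i * (l2 (D.mulVec (aT + (2⁻¹:ℝ) • zv i)))^2
        = w i * (l2 (D.mulVec aT))^2 + (w i * ((D.mulVec aT) ⬝ᵥ D.mulVec (zv i)))
          + 4⁻¹ * (w i * (l2 (D.mulVec (zv i)))^2) := by
      intro i _
      rw [hDlin i, l2sq_add_smul]
      ring
    rw [Finset.sum_congr rfl hexp, Finset.sum_add_distrib, Finset.sum_add_distrib]
    have h1 : ∑ i ∈ t, w i * (l2 (D.mulVec aT))^2 = (l2 (D.mulVec aT))^2 := by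
      rw [← Finset.sum_mul, hw1, one_mul]
    have h2 : ∑ i ∈ t, w i * ((D.mulVec aT) ⬝ᵥ D.mulVec (zv i)) = A^2 - (l2 (D.mulVec aT))^2 := by
      rw [← hdot_aT, hDaC, dot_sum]
      apply Finset.sum_congr rfl
      intro i _
      rw [dotProduct_smul, smul_eq_mul]
    have h3 : ∑ i ∈ t, 4⁻¹ * (w i * (l2 (D.mulVec (zv i)))^2) = 4⁻¹ * W := by
      rw [hW, Finset.mul_sum]
    rw [h1, h2, h3]
    ring
  -- the central inequality
  have hWV : V ≤ (1+δ)*W := by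
    rw [hV, hW, Finset.mul_sum]
    apply Finset.sum_le_sum
    intro i hi
    have := hRIP_z i hi
    have hwi := hw0 i hi
    calc w i * (l2 (Φ.mulVec (D.mulVec (zv i))))^2
        ≤ w i * ((1+δ)*(l2 (D.mulVec (zv i)))^2) := by
          apply mul_le_mul_of_nonneg_left this hwi
      _ = (1+δ)*(w i * (l2 (D.mulVec (zv i)))^2) := by ring
  have hW0 : 0 ≤ W := by
    rw [hW]
    apply Finset.sum_nonneg
    intro i hi
    exact mul_nonneg (hw0 i hi) (sq_nonneg _)
  have hlower : (1-δ)*(A^2 + 4⁻¹*W) ≤ X ⬝ᵥ Hv + 4⁻¹*V := by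
    rw [← hS1, ← hS2, Finset.mul_sum]
    apply Finset.sum_le_sum
    intro i hi
    have h1 := hRIP_p i hi
    have hwi := hw0 i hi
    calc (1-δ)*(w i * (l2 (D.mulVec (aT + (2⁻¹:ℝ) • zv i)))^2)
        = w i * ((1-δ)*(l2 (D.mulVec (aT + (2⁻¹:ℝ) • zv i)))^2) := by ring
      _ ≤ w i * (l2 (Φ.mulVec (D.mulVec (aT + (2⁻¹:ℝ) • zv i))))^2 :=
          mul_le_mul_of_nonneg_left h1 hwi
  have hl2X : l2 X ≤ Real.sqrt (1+δ) * A := by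
    have h1 : (l2 X)^2 ≤ (1+δ)*(l2 (D.mulVec aT))^2 := hRIP_aT.2
    have h2 : l2 (D.mulVec aT) ≤ A := frame_contract D hD aT
    have h3 : (Real.sqrt (1+δ))^2 = 1+δ := Real.sq_sqrt (by linarith)
    have h5 : (l2 (D.mulVec aT))^2 ≤ A^2 := by
      apply pow_le_pow_left₀ (l2_nonneg _) h2
    have h4 : (l2 X)^2 ≤ (Real.sqrt (1+δ)*A)^2 := by
      rw [mul_pow, h3]
      calc (l2 X)^2 ≤ (1+δ)*(l2 (D.mulVec aT))^2 := h1
        _ ≤ (1+δ)*A^2 := mul_le_mul_of_nonneg_left h5 (by linarith)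
    exact le_of_sq_le_sq' _ _ (by positivity) h4 (l2_nonneg X)
  have hXH : X ⬝ᵥ Hv ≤ 2*Real.sqrt (1+δ)*A*ε := by
    calc X ⬝ᵥ Hv ≤ l2 X * l2 Hv := dot_le _ _
      _ ≤ (Real.sqrt (1+δ)*A) * (2*ε) := by
          apply mul_le_mul hl2X hΦh (l2_nonneg _)
          positivity
      _ = 2*Real.sqrt (1+δ)*A*ε := by ring
  have hWbd : W ≤ (A+η)^2 := by
    have h1 : ∀ i ∈ t, (l2 (D.mulVec (zv i)))^2 ≤ (A+η)^2 := by
      intro i hi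
      have h2 : l2 (D.mulVec (zv i)) ≤ l2 (zv i) := frame_contract D hD (zv i)
      have h3 : (l2 (zv i))^2 ≤ (k:ℝ)*α^2 := sparse_l2sq_le (hzmem i hi).1 (hzmem i hi).2
      have h4 : (k:ℝ)*α^2 ≤ (A+η)^2 := by
        have e1 : (k:ℝ)*α^2 = (l1 aT + 2*e)^2 / k := by
          rw [hα]; field_simp
        have e2 : (A+η)^2 = (sk*A + 2*e)^2 / k := by
          rw [hη, ← hsk2]; field_simp
        rw [e1, e2]
        have h5 : (l1 aT + 2*e)^2 ≤ (sk*A + 2*e)^2 := by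
          apply pow_le_pow_left₀ (by linarith) (by linarith)
        gcongr
      calc (l2 (D.mulVec (zv i)))^2 ≤ (l2 (zv i))^2 := by
            apply pow_le_pow_left₀ (l2_nonneg _) h2
        _ ≤ (k:ℝ)*α^2 := h3
        _ ≤ (A+η)^2 := h4
    rw [hW]
    calc ∑ i ∈ t, w i * (l2 (D.mulVec (zv i)))^2 ≤ ∑ i ∈ t, w i * (A+η)^2 := by
          apply Finset.sum_le_sum
          intro i hi
          exact mul_le_mul_of_nonneg_left (h1 i hi) (hw0 i hi)
      _ = (A+η)^2 := by rw [← Finset.sum_mul, hw1, one_mul]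
  have hδW : (δ/2)*W ≤ (δ/2)*(A+η)^2 :=
    mul_le_mul_of_nonneg_left hWbd (by linarith)
  have hkey : (1-δ)*A^2 ≤ 2*Real.sqrt (1+δ)*A*ε + (δ/2)*(A+η)^2 := by
    linarith [hlower, hWV, hXH, hδW, hW0]
  -- solve the quadratic
  have hAbd := quad_bound δ ε A η hδ0 hδ hA0 hε0 hη0 hkey
  -- tail l2 bound
  have htl2 : (l2 aC)^2 ≤ A^2 + A*η := by
    have h1 : (l2 aC)^2 = ∑ j ∈ Tᶜ, (av j)^2 := by rw [haC]; exact l2sq_restrict Tᶜ av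
    have h2 : ∑ j ∈ Tᶜ, (av j)^2 ≤ (l1 aT/k) * ∑ j ∈ Tᶜ, |av j| := by
      rw [Finset.mul_sum]
      apply Finset.sum_le_sum
      intro j hj
      have hjT : j ∉ T := by simpa using hj
      have h3 := hinfty j hjT
      have h4 : |av j| ≤ l1 aT/k := by
        rw [le_div_iff₀ hkR]
        linarith only [h3, mul_comm (|av j|) (k:ℝ)]
      calc (av j)^2 = |av j| * |av j| := by rw [← sq_abs]; ring
        _ ≤ (l1 aT/k) * |av j| := mul_le_mul_of_nonneg_right h4 (abs_nonneg _)
    have h5 : ∑ j ∈ Tᶜ, |av j| = l1 aC := by rw [haC, l1_restrict]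
    have h6 : l1 aC ≤ l1 aT + 2*e := hconeT
    have h7 : (l1 aT/k) * l1 aC ≤ (sk*A/k)*(sk*A + 2*e) := by
      apply mul_le_mul
      · apply div_le_div_of_nonneg_right hl1aT hkR.le
      · linarith only [h6, hl1aT]
      · exact l1_nonneg _
      · positivity
    have h8 : (sk*A/k)*(sk*A + 2*e) = A^2 + A*η := by
      rw [hη, ← hsk2]
      field_simp
    rw [h1]
    calc ∑ j ∈ Tᶜ, (av j)^2 ≤ (l1 aT/k) * ∑ j ∈ Tᶜ, |av j| := h2
      _ = (l1 aT/k) * l1 aC := by rw [h5]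
      _ ≤ (sk*A/k)*(sk*A + 2*e) := h7
      _ = A^2 + A*η := h8
  -- assemble
  set r2 := Real.sqrt 2 with hr2
  have hr20 : 0 < r2 := Real.sqrt_pos.mpr (by norm_num)
  have hr22 : r2^2 = 2 := Real.sq_sqrt (by norm_num)
  have hr2le : r2 ≤ 3/2 :=
    le_of_sq_le_sq' r2 (3/2) (by norm_num) (by rw [hr22]; norm_num) hr20.le
  have hr2ge : 1 ≤ r2 :=
    le_of_sq_le_sq' 1 r2 hr20.le (by rw [hr22]; norm_num) (by norm_num)
  have hfinal1 : l2 (β - βhat) ≤ r2*A + η/(2*r2) := by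
    have h1 : l2 (β - βhat) = l2 av := by
      rw [← hhv, hav]
      exact (frame_iso D hD hv).symm
    have h2 : (l2 av)^2 = A^2 + (l2 aC)^2 := by
      rw [hA, haT, haC]
      exact l2sq_split T av
    have h3 : (l2 av)^2 ≤ (r2*A + η/(2*r2))^2 := by
      have h4a : (r2*A + η/(2*r2))^2 = r2^2*A^2 + A*η + η^2/(4*r2^2) := by
        field_simp
        ring
      have h4 : (r2*A + η/(2*r2))^2 = 2*A^2 + A*η + η^2/8 := by
        rw [h4a, hr22]; norm_num
      rw [h2, h4]
      linarith only [htl2, sq_nonneg η]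
    have h5 : 0 ≤ r2*A + η/(2*r2) := by positivity
    rw [h1]
    exact le_of_sq_le_sq' _ _ h5 h3 (l2_nonneg av)
  have hsqrt6 : Real.sqrt (6*δ*(2/3-δ)) = r2 * Real.sqrt (δ*(2-3*δ)) := by
    rw [hr2, ← Real.sqrt_mul (by norm_num : (0:ℝ) ≤ 2)]
    congr 1
    ring
  set s := Real.sqrt (δ*(2-3*δ)) with hsdef
  have hs0 : 0 ≤ s := Real.sqrt_nonneg _
  set c := Real.sqrt (1+δ) with hc
  have hc0 : 0 ≤ c := Real.sqrt_nonneg _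
  have hQ : (0:ℝ) < 2-3*δ := by linarith
  have h3Q : 3*(2/3-δ) = 2-3*δ := by ring
  -- final arithmetic
  rw [h3Q, hsqrt6]
  have heη : e/sk = η/2 := by rw [hη]; ring
  rw [heη]
  have hstep : r2*A + η/(2*r2) ≤ r2*((4*c*ε + 2*δ*η + s*η)/(2-3*δ)) + η/(2*r2) := by
    have h9 := mul_le_mul_of_nonneg_left hAbd (le_of_lt hr20)
    linarith only [h9]
  apply le_trans hfinal1
  apply le_trans hstep
  -- remains: r2*((4cε+2δη+sη)/Q) + η/(2r2) ≤ 8c/Q*ε + (2 + 2(4δ+r2*s)/Q)*(η/2)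
  rw [← sub_nonneg]
  have hexpand : 8*c/(2-3*δ)*ε + (2 + 2*(4*δ + r2*s)/(2-3*δ))*(η/2)
      - (r2*((4*c*ε + 2*δ*η + s*η)/(2-3*δ)) + η/(2*r2))
      = ((8-4*r2)*c*ε + (4-2*r2)*δ*η)/(2-3*δ) + (1 - 1/(2*r2))*η := by
    field_simp
    ring
  rw [hexpand]
  have h1 : 0 ≤ ((8-4*r2)*c*ε + (4-2*r2)*δ*η)/(2-3*δ) := by
    apply div_nonneg _ (le_of_lt hQ)
    have ha1 : 0 ≤ (8-4*r2)*c*ε := by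
      apply mul_nonneg (mul_nonneg (by linarith only [hr2le]) hc0) hε0
    have ha2 : 0 ≤ (4-2*r2)*δ*η := by
      apply mul_nonneg (mul_nonneg (by linarith only [hr2le]) hδ0) hη0
    linarith only [ha1, ha2]
  have h2 : 0 ≤ (1 - 1/(2*r2))*η := by
    apply mul_nonneg _ hη0
    have hb1 : 1/(2*r2) ≤ 1/2 := by
      apply div_le_div_of_nonneg_left (by norm_num) (by norm_num) (by linarith only [hr2ge])
    linarith only [hb1]
  linarith only [h1, h2]
end

section
/- Let h ∈ ℝ^p, D ∈ ℝ^{p×d} with DD* = I, T = indices of the k largest entries of D*h. Suppose ‖D*_{T^C} h‖₁ ≤ 2c + ‖D*_T h‖₁ for some c ≥ 0. Then ‖D*_{T^C} h‖₂ ≤ 2c/√k + ‖D*_T h‖₂. -/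
open scoped Classical BigOperators

theorem tail_l2_bound {p d k : ℕ} (hk : 0 < k) (D : Matrix (Fin p) (Fin d) ℝ)
    (hD : D * D.transpose = 1) (h : Fin p → ℝ)
    (T : Finset (Fin d)) (hT : IsLargestK k (D.transpose.mulVec h) T)
    (c : ℝ) (hc : 0 ≤ c)
    (hyp : l1 (restrict Tᶜ (D.transpose.mulVec h)) ≤
      2 * c + l1 (restrict T (D.transpose.mulVec h))) :
    l2 (restrict Tᶜ (D.transpose.mulVec h)) ≤
      2 * c / Real.sqrt k + l2 (restrict T (D.transpose.mulVec h)) := by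
  set v := D.transpose.mulVec h with hv
  obtain ⟨hcard, hmax⟩ := hT
  have l1r : ∀ S : Finset (Fin d), l1 (restrict S v) = ∑ i ∈ S, |v i| := by
    intro S
    unfold l1 restrict
    rw [← Finset.sum_subset (Finset.subset_univ S)]
    · apply Finset.sum_congr rfl; intro i hi; simp [hi]
    · intro i _ hi; simp [hi]
  have sqr : ∀ S : Finset (Fin d), (∑ i, (restrict S v i) ^ 2) = ∑ i ∈ S, (v i) ^ 2 := by
    intro S
    unfold restrict
    rw [← Finset.sum_subset (Finset.subset_univ S)]
    · apply Finset.sum_congr rfl; intro i hi; simp [hi]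
    · intro i _ hi; simp [hi]
  set A := l1 (restrict T v) with hA
  set B := l2 (restrict T v) with hB
  set U := l2 (restrict Tᶜ v) with hU
  have hkR : (0:ℝ) < k := by exact_mod_cast hk
  set sk := Real.sqrt k with hsk
  have hskpos : 0 < sk := Real.sqrt_pos.mpr hkR
  have hsksq : sk ^ 2 = k := Real.sq_sqrt hkR.le
  have hA0 : 0 ≤ A := by
    rw [hA, l1r]; exact Finset.sum_nonneg fun i _ => abs_nonneg _
  have hB0 : 0 ≤ B := Real.sqrt_nonneg _
  have hU0 : 0 ≤ U := Real.sqrt_nonneg _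
  have hsum0 : 0 ≤ ∑ i, (restrict Tᶜ v i) ^ 2 := Finset.sum_nonneg fun i _ => sq_nonneg _
  have hUsq : U ^ 2 = ∑ i ∈ Tᶜ, (v i) ^ 2 := by
    rw [hU]; unfold l2; rw [Real.sq_sqrt hsum0, sqr]
  have hBsq : B ^ 2 = ∑ i ∈ T, (v i) ^ 2 := by
    rw [hB]; unfold l2
    rw [Real.sq_sqrt (Finset.sum_nonneg fun i _ => sq_nonneg _), sqr]
  have hentry : ∀ i ∈ Tᶜ, (k : ℝ) * |v i| ≤ A := by
    intro i hi
    rw [hA, l1r]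
    have hiT : i ∉ T := Finset.mem_compl.mp hi
    calc (k : ℝ) * |v i| = ∑ _j ∈ T, |v i| := by
          rw [Finset.sum_const, nsmul_eq_mul, hcard]
      _ ≤ ∑ j ∈ T, |v j| := Finset.sum_le_sum fun j hj => hmax j hj i hiT
  have hU2k : U ^ 2 * k ≤ (2 * c + A) * A := by
    have step : (k : ℝ) * ∑ i ∈ Tᶜ, (v i) ^ 2 ≤ A * ∑ i ∈ Tᶜ, |v i| := by
      rw [Finset.mul_sum, Finset.mul_sum]
      apply Finset.sum_le_sum
      intro i hi
      have h1 : (k : ℝ) * |v i| ≤ A := hentry i hi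
      have h2 : (k : ℝ) * (v i) ^ 2 = ((k : ℝ) * |v i|) * |v i| := by
        rw [← sq_abs]; ring
      rw [h2]
      exact mul_le_mul_of_nonneg_right h1 (abs_nonneg _)
    have hl1c : ∑ i ∈ Tᶜ, |v i| ≤ 2 * c + A := by
      rw [← l1r]; exact hyp
    have h2 : A * ∑ i ∈ Tᶜ, |v i| ≤ A * (2 * c + A) :=
      mul_le_mul_of_nonneg_left hl1c hA0
    rw [hUsq]
    nlinarith [step, h2]
  have hCS : A ^ 2 ≤ (k : ℝ) * B ^ 2 := by
    rw [hA, l1r, hBsq]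
    have hcs := sq_sum_le_card_mul_sum_sq (s := T) (f := fun i => |v i|)
    simp only [sq_abs] at hcs
    rw [hcard] at hcs
    exact_mod_cast hcs
  have hAB : A ≤ sk * B := by
    nlinarith [mul_nonneg hskpos.le hB0, sq_nonneg (A - sk * B)]
  have key : U * sk ≤ 2 * c + B * sk := by
    nlinarith [mul_nonneg hU0 hskpos.le, mul_nonneg hB0 hskpos.le,
      mul_nonneg hc (mul_nonneg hB0 hskpos.le), sq_nonneg (U * sk - (2 * c + B * sk)),
      mul_le_mul_of_nonneg_right hAB hA0, mul_le_mul_of_nonneg_left hAB (mul_nonneg hc hskpos.le),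
      hU2k, hsksq]
  have hfin : U ≤ (2 * c + B * sk) / sk := by
    rw [le_div_iff₀ hskpos]; exact key
  calc U ≤ (2 * c + B * sk) / sk := hfin
    _ = 2 * c / sk + B := by field_simp
end
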